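/- Let (F_s)_{s>0} be a family in L²(ℝⁿ) (jointly measurable in (x,s)), and for k ∈ ℤ set t_k = 2^{k−1}. Suppose ∫₀^∞ ‖s ∂_s F_s‖²_{L²} ds/s < ∞ in the sense that G(x,s) := ∂_s F_s(x) exists and s G(·,s) has finite square function norm. Then Σ_{k=−∞}^∞ ∫_{2^{k−1}}^{2^{k+2}} ∫_{ℝⁿ} |F_t(x) − F_{t_k}(x)|² dx dt/t ≤ C ∫₀^∞ ∫_{ℝⁿ} |s ∂_s F_s(x)|² dx ds/s. -/

import Mathlib

open MeasureTheory Set ENNReal Function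

/-- Cauchy–Schwarz for lintegrals: `(∫ f)² ≤ (∫ f²) · μ(univ)`. -/
lemma stmt10_cs {α : Type*} [MeasurableSpace α] (μ : Measure α) {f : α → ℝ≥0∞}
    (hf : AEMeasurable f μ) :
    (∫⁻ a, f a ∂μ) ^ 2 ≤ (∫⁻ a, f a ^ 2 ∂μ) * μ univ := by
  have hpq : Real.HolderConjugate 2 2 := Real.HolderConjugate.two_two
  have h := ENNReal.lintegral_mul_le_Lp_mul_Lq μ hpq hf
    (aemeasurable_const (b := (1 : ℝ≥0∞)))
  simp only [Pi.mul_apply, mul_one, ENNReal.one_rpow, lintegral_one] at h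
  calc (∫⁻ a, f a ∂μ) ^ 2
      ≤ ((∫⁻ a, f a ^ (2:ℝ) ∂μ) ^ (1/2 : ℝ) * (μ univ) ^ (1/2 : ℝ)) ^ 2 :=
        pow_le_pow_left' h 2
    _ = (∫⁻ a, f a ^ (2:ℝ) ∂μ) * μ univ := by
        rw [mul_pow, ← ENNReal.rpow_natCast (_ ^ (1/2:ℝ)) 2,
          ← ENNReal.rpow_natCast ((μ univ) ^ (1/2:ℝ)) 2,
          ← ENNReal.rpow_mul, ← ENNReal.rpow_mul]
        norm_num
    _ = (∫⁻ a, f a ^ 2 ∂μ) * μ univ := by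
        congr 1
        refine lintegral_congr fun a => ?_
        rw [← ENNReal.rpow_natCast (f a) 2]
        norm_num

/-- Each `s > 0` lies in at most three of the windows `(2^{k-1}, 2^{k+2})`. -/
lemma stmt10_count (g : ℝ → ℝ≥0∞) {s : ℝ} (hs : 0 < s) :
    ∑' k : ℤ, (Ioo ((2:ℝ)^(k-1)) ((2:ℝ)^(k+2))).indicator g s ≤ 3 * g s := by
  set L := Int.log 2 s with hL
  have h1 : (2:ℝ) ^ L ≤ s := by
    have := Int.zpow_log_le_self (b := 2) (R := ℝ) one_lt_two hs
    simpa using this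
  have h2 : s < (2:ℝ) ^ (L + 1) := by
    have := Int.lt_zpow_succ_log_self (b := 2) (R := ℝ) one_lt_two s
    simpa using this
  have key : ∀ k : ℤ, k ∉ ({L-1, L, L+1} : Finset ℤ) →
      (Ioo ((2:ℝ)^(k-1)) ((2:ℝ)^(k+2))).indicator g s = 0 := by
    intro k hk
    apply indicator_of_notMem
    intro hmem
    have hk1 : k - 1 < L + 1 :=
      (zpow_lt_zpow_iff_right₀ (by norm_num : (1:ℝ) < 2)).mp (lt_trans hmem.1 h2)
    have hk2 : L < k + 2 :=
      (zpow_lt_zpow_iff_right₀ (by norm_num : (1:ℝ) < 2)).mp (lt_of_le_of_lt h1 hmem.2)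
    apply hk
    simp only [Finset.mem_insert, Finset.mem_singleton]
    omega
  calc ∑' k : ℤ, (Ioo ((2:ℝ)^(k-1)) ((2:ℝ)^(k+2))).indicator g s
      = ∑ k ∈ ({L-1, L, L+1} : Finset ℤ),
          (Ioo ((2:ℝ)^(k-1)) ((2:ℝ)^(k+2))).indicator g s := tsum_eq_sum key
    _ ≤ ∑ _k ∈ ({L-1, L, L+1} : Finset ℤ), g s :=
        Finset.sum_le_sum fun k _ => indicator_le_self _ _ s
    _ = (({L-1, L, L+1} : Finset ℤ).card : ℝ≥0∞) * g s := by
        rw [Finset.sum_const, nsmul_eq_mul]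
    _ ≤ 3 * g s := by
        have hcard : ({L-1, L, L+1} : Finset ℤ).card ≤ 3 := by
          refine le_trans (Finset.card_insert_le _ _) ?_
          have h' := Finset.card_insert_le L ({L+1} : Finset ℤ)
          simp only [Finset.card_singleton] at h'
          omega
        exact mul_le_mul_left (by exact_mod_cast Nat.cast_le.mpr hcard) _

/-- In `ℝ≥0∞`, `y ≤ y² + 1`. -/
lemma stmt10_le_sq_add_one (y : ℝ≥0∞) : y ≤ y ^ 2 + 1 := by
  rcases le_total y 1 with h | h
  · exact h.trans le_add_self
  · calc y = y * 1 := (mul_one y).symm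
      _ ≤ y * y := mul_le_mul_right h y
      _ = y ^ 2 := (sq y).symm
      _ ≤ y ^ 2 + 1 := le_self_add

/-- Discretization lemma: with `t_k = 2^{k−1}`,
`Σ_k ∫_{2^{k−1}}^{2^{k+2}} ‖F_t − F_{t_k}‖² dt/t ≤ C ∫₀^∞ ‖s ∂_s F_s‖² ds/s`. -/
theorem stmt10 {n : ℕ} (hn : 1 ≤ n) :
    ∃ C : ℝ, 0 < C ∧
      ∀ (F G : ℝ → (Fin n → ℝ) → ℂ),
        Measurable (Function.uncurry F) → Measurable (Function.uncurry G) →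
        (∀ x : Fin n → ℝ, ∀ s > (0:ℝ), HasDerivAt (fun σ => F σ x) (G s x) s) →
        (∫⁻ s in Ioi (0:ℝ), (∫⁻ x, (‖G s x‖₊ : ℝ≥0∞) ^ 2) * ENNReal.ofReal s) < ⊤ →
        (∑' k : ℤ, ∫⁻ t in Ioo ((2:ℝ)^(k-1)) ((2:ℝ)^(k+2)),
            (∫⁻ x, (‖F t x - F ((2:ℝ)^(k-1)) x‖₊ : ℝ≥0∞) ^ 2) / ENNReal.ofReal t)
          ≤ ENNReal.ofReal C *
            ∫⁻ s in Ioi (0:ℝ), (∫⁻ x, (‖G s x‖₊ : ℝ≥0∞) ^ 2) * ENNReal.ofReal s := by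
  refine ⟨192, by norm_num, ?_⟩
  intro F G hF hG hderiv hfin
  -- measurability facts
  have hGsm : ∀ x : Fin n → ℝ, Measurable fun s => G s x := fun x =>
    hG.comp (measurable_id.prodMk measurable_const)
  have hGxm : ∀ s : ℝ, Measurable fun x => G s x := fun s =>
    hG.comp (measurable_const.prodMk measurable_id)
  have hGm2 : Measurable (fun p : ℝ × (Fin n → ℝ) => (‖G p.1 p.2‖₊ : ℝ≥0∞) ^ 2) :=
    hG.enorm.pow_const 2
  set H : ℝ → ℝ≥0∞ := fun s => ∫⁻ x, (‖G s x‖₊ : ℝ≥0∞) ^ 2 with hHdef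
  have hHm : Measurable H := hGm2.lintegral_prod_right'
  -- Tonelli-type swap
  have swap : ∀ (A : Set ℝ) (w : ℝ → ℝ≥0∞), Measurable w →
      ∫⁻ s in A, H s * w s
        = ∫⁻ x, ∫⁻ s in A, (‖G s x‖₊ : ℝ≥0∞) ^ 2 * w s := by
    intro A w hw
    have hmul : ∀ s, H s * w s = ∫⁻ x, (‖G s x‖₊ : ℝ≥0∞) ^ 2 * w s := by
      intro s
      rw [hHdef]
      exact (lintegral_mul_const _ (((hGxm s).enorm).pow_const 2)).symm
    rw [lintegral_congr hmul]
    exact lintegral_lintegral_swap ((hGm2.mul (hw.comp measurable_fst)).aemeasurable)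
  -- a.e. finiteness in x
  set M : (Fin n → ℝ) → ℝ≥0∞ :=
    fun x => ∫⁻ s in Ioi (0:ℝ), (‖G s x‖₊ : ℝ≥0∞) ^ 2 * ENNReal.ofReal s with hMdef
  have hMm : Measurable M :=
    Measurable.lintegral_prod_left' (μ := volume.restrict (Ioi (0:ℝ)))
      (hGm2.mul (ENNReal.measurable_ofReal.comp measurable_fst))
  have hswap0 := swap (Ioi (0:ℝ)) (fun s => ENNReal.ofReal s) ENNReal.measurable_ofReal
  have hfin' : (∫⁻ x, M x) ≠ ⊤ := by
    rw [hMdef, ← hswap0]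
    exact hfin.ne
  have hae : ∀ᵐ x, M x < ⊤ := ae_lt_top hMm hfin'
  -- main per-window estimate
  have main : ∀ k : ℤ,
      (∫⁻ t in Ioo ((2:ℝ)^(k-1)) ((2:ℝ)^(k+2)),
          (∫⁻ x, (‖F t x - F ((2:ℝ)^(k-1)) x‖₊ : ℝ≥0∞) ^ 2) / ENNReal.ofReal t)
      ≤ 64 * ∫⁻ s in Ioo ((2:ℝ)^(k-1)) ((2:ℝ)^(k+2)), H s * ENNReal.ofReal s := by
    intro k
    set a : ℝ := (2:ℝ)^(k-1) with hadef
    set b : ℝ := (2:ℝ)^(k+2) with hbdef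
    have ha : 0 < a := by rw [hadef]; positivity
    have hab : a < b := by
      rw [hadef, hbdef]
      exact (zpow_lt_zpow_iff_right₀ (by norm_num : (1:ℝ) < 2)).mpr (by omega)
    have hb8 : b = 8 * a := by
      rw [hadef, hbdef, show k + 2 = (k - 1) + 3 by ring,
        zpow_add₀ (by norm_num : (2:ℝ) ≠ 0)]
      norm_num
      ring
    have hane : ENNReal.ofReal a ≠ 0 := (ENNReal.ofReal_pos.mpr ha).ne'
    set K : ℝ≥0∞ := ∫⁻ s in Ioo a b, H s with hKdef
    -- inner estimate for fixed t
    have inner_bound : ∀ t ∈ Ioo a b,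
        (∫⁻ x, (‖F t x - F a x‖₊ : ℝ≥0∞) ^ 2) ≤ ENNReal.ofReal b * K := by
      intro t ht
      have hat : a ≤ t := ht.1.le
      have htb : t < b := ht.2
      have ptwise : ∀ᵐ x, (‖F t x - F a x‖₊ : ℝ≥0∞) ^ 2
          ≤ (∫⁻ s in Ioo a b, (‖G s x‖₊ : ℝ≥0∞) ^ 2) * ENNReal.ofReal b := by
        filter_upwards [hae] with x hx
        have hsub0 : Ioc a t ⊆ Ioi (0:ℝ) := fun s hs => ha.trans hs.1
        -- square integral bound on the window
        have hsq : ∫⁻ s in Ioc a t, (‖G s x‖₊ : ℝ≥0∞) ^ 2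
            ≤ (ENNReal.ofReal a)⁻¹ * M x := by
          have step1 : ∫⁻ s in Ioc a t, (‖G s x‖₊ : ℝ≥0∞) ^ 2
              ≤ ∫⁻ s in Ioc a t,
                  (ENNReal.ofReal a)⁻¹ * ((‖G s x‖₊ : ℝ≥0∞) ^ 2 * ENNReal.ofReal s) := by
            refine setLIntegral_mono' measurableSet_Ioc fun s hs => ?_
            calc (‖G s x‖₊ : ℝ≥0∞) ^ 2
                = (‖G s x‖₊ : ℝ≥0∞) ^ 2 * ((ENNReal.ofReal a)⁻¹ * ENNReal.ofReal a) := by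
                  rw [ENNReal.inv_mul_cancel hane ENNReal.ofReal_ne_top, mul_one]
              _ ≤ (‖G s x‖₊ : ℝ≥0∞) ^ 2 * ((ENNReal.ofReal a)⁻¹ * ENNReal.ofReal s) := by
                  gcongr
                  exact hs.1.le
              _ = (ENNReal.ofReal a)⁻¹ * ((‖G s x‖₊ : ℝ≥0∞) ^ 2 * ENNReal.ofReal s) := by
                  ring
          rw [lintegral_const_mul' _ _ (ENNReal.inv_ne_top.mpr hane)] at step1
          refine step1.trans ?_
          gcongr
          rw [hMdef]
          exact lintegral_mono_set hsub0
        -- interval integrability of the derivative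
        have hInt : IntervalIntegrable (fun s => G s x) volume a t := by
          rw [intervalIntegrable_iff_integrableOn_Ioc_of_le hat]
          refine ⟨(hGsm x).aestronglyMeasurable, ?_⟩
          rw [hasFiniteIntegral_def]
          calc ∫⁻ s in Ioc a t, (‖G s x‖₊ : ℝ≥0∞)
              ≤ ∫⁻ s in Ioc a t, ((‖G s x‖₊ : ℝ≥0∞) ^ 2 + 1) :=
                lintegral_mono fun s => stmt10_le_sq_add_one _
            _ = (∫⁻ s in Ioc a t, (‖G s x‖₊ : ℝ≥0∞) ^ 2) + volume (Ioc a t) := by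
                rw [lintegral_add_right _ measurable_const, setLIntegral_const, one_mul]
            _ < ⊤ := by
                refine ENNReal.add_lt_top.mpr ⟨lt_of_le_of_lt hsq ?_, ?_⟩
                · exact ENNReal.mul_lt_top (ENNReal.inv_ne_top.mpr hane).lt_top hx
                · rw [Real.volume_Ioc]
                  exact ENNReal.ofReal_lt_top
        -- fundamental theorem of calculus
        have hFTC : ∫ s in a..t, G s x = F t x - F a x := by
          apply intervalIntegral.integral_eq_sub_of_hasDerivAt
          · intro s hs
            rw [uIcc_of_le hat] at hs
            exact hderiv x s (lt_of_lt_of_le ha hs.1)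
          · exact hInt
        calc (‖F t x - F a x‖₊ : ℝ≥0∞) ^ 2
            = (‖∫ s in a..t, G s x‖₊ : ℝ≥0∞) ^ 2 := by rw [hFTC]
          _ ≤ (∫⁻ s in Ioc a t, (‖G s x‖₊ : ℝ≥0∞)) ^ 2 := by
              gcongr
              rw [intervalIntegral.integral_of_le hat]
              exact enorm_integral_le_lintegral_enorm _
          _ ≤ (∫⁻ s in Ioo a b, (‖G s x‖₊ : ℝ≥0∞)) ^ 2 := by
              gcongr
          _ ≤ (∫⁻ s in Ioo a b, (‖G s x‖₊ : ℝ≥0∞) ^ 2)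
                * (volume.restrict (Ioo a b)) univ :=
              stmt10_cs _ (hGsm x).enorm.aemeasurable
          _ ≤ (∫⁻ s in Ioo a b, (‖G s x‖₊ : ℝ≥0∞) ^ 2) * ENNReal.ofReal b := by
              gcongr
              rw [Measure.restrict_apply_univ, Real.volume_Ioo]
              exact ENNReal.ofReal_le_ofReal (by linarith)
      calc ∫⁻ x, (‖F t x - F a x‖₊ : ℝ≥0∞) ^ 2
          ≤ ∫⁻ x, (∫⁻ s in Ioo a b, (‖G s x‖₊ : ℝ≥0∞) ^ 2) * ENNReal.ofReal b :=
            lintegral_mono_ae ptwise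
        _ = (∫⁻ x, ∫⁻ s in Ioo a b, (‖G s x‖₊ : ℝ≥0∞) ^ 2) * ENNReal.ofReal b :=
            lintegral_mul_const _
              (Measurable.lintegral_prod_left' (μ := volume.restrict (Ioo a b)) hGm2)
        _ = ENNReal.ofReal b * K := by
            rw [hKdef, mul_comm]
            congr 1
            have hswap1 := swap (Ioo a b) (fun _ => 1) measurable_const
            simp only [mul_one] at hswap1
            exact hswap1.symm
    -- integrate in t over the window
    calc ∫⁻ t in Ioo a b, (∫⁻ x, (‖F t x - F a x‖₊ : ℝ≥0∞) ^ 2) / ENNReal.ofReal t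
        ≤ ∫⁻ _t in Ioo a b, (ENNReal.ofReal b * K) / ENNReal.ofReal a := by
          refine setLIntegral_mono' measurableSet_Ioo fun t ht => ?_
          exact ENNReal.div_le_div (inner_bound t ht) (ENNReal.ofReal_le_ofReal ht.1.le)
      _ = (ENNReal.ofReal b * K / ENNReal.ofReal a) * volume (Ioo a b) :=
          setLIntegral_const _ _
      _ ≤ (ENNReal.ofReal b * K / ENNReal.ofReal a) * ENNReal.ofReal b := by
          gcongr
          rw [Real.volume_Ioo]
          exact ENNReal.ofReal_le_ofReal (by linarith)
      _ = (ENNReal.ofReal b * ENNReal.ofReal b * (ENNReal.ofReal a)⁻¹) * K := by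
          rw [div_eq_mul_inv]
          ring
      _ = ENNReal.ofReal (64 * a) * K := by
          rw [hb8, ENNReal.ofReal_mul (by norm_num : (0:ℝ) ≤ 8),
            ENNReal.ofReal_mul (by norm_num : (0:ℝ) ≤ 64)]
          rw [show ENNReal.ofReal 8 * ENNReal.ofReal a * (ENNReal.ofReal 8 * ENNReal.ofReal a)
                * (ENNReal.ofReal a)⁻¹
              = ENNReal.ofReal 8 * ENNReal.ofReal 8
                * (ENNReal.ofReal a * (ENNReal.ofReal a * (ENNReal.ofReal a)⁻¹)) from by ring]
          rw [ENNReal.mul_inv_cancel hane ENNReal.ofReal_ne_top, mul_one,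
            ← ENNReal.ofReal_mul (by norm_num : (0:ℝ) ≤ 8)]
          norm_num
      _ ≤ 64 * ∫⁻ s in Ioo a b, H s * ENNReal.ofReal s := by
          rw [hKdef, ← lintegral_const_mul' _ _ ENNReal.ofReal_ne_top,
            ← lintegral_const_mul' _ _ (by norm_num : (64:ℝ≥0∞) ≠ ⊤)]
          refine setLIntegral_mono' measurableSet_Ioo fun s hs => ?_
          calc ENNReal.ofReal (64 * a) * H s
              = 64 * (ENNReal.ofReal a * H s) := by
                rw [ENNReal.ofReal_mul (by norm_num : (0:ℝ) ≤ 64)]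
                norm_num
                ring
            _ ≤ 64 * (ENNReal.ofReal s * H s) := by
                gcongr
                exact hs.1.le
            _ = 64 * (H s * ENNReal.ofReal s) := by ring
  -- sum over k
  have hm : Measurable fun s => H s * ENNReal.ofReal s := hHm.mul ENNReal.measurable_ofReal
  have hsum : ∑' k : ℤ, ∫⁻ s in Ioo ((2:ℝ)^(k-1)) ((2:ℝ)^(k+2)), H s * ENNReal.ofReal s
      ≤ 3 * ∫⁻ s in Ioi (0:ℝ), H s * ENNReal.ofReal s := by
    calc ∑' k : ℤ, ∫⁻ s in Ioo ((2:ℝ)^(k-1)) ((2:ℝ)^(k+2)), H s * ENNReal.ofReal s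
        = ∑' k : ℤ, ∫⁻ s, (Ioo ((2:ℝ)^(k-1)) ((2:ℝ)^(k+2))).indicator
            (fun s => H s * ENNReal.ofReal s) s :=
          tsum_congr fun k => (lintegral_indicator measurableSet_Ioo _).symm
      _ = ∫⁻ s, ∑' k : ℤ, (Ioo ((2:ℝ)^(k-1)) ((2:ℝ)^(k+2))).indicator
            (fun s => H s * ENNReal.ofReal s) s :=
          (lintegral_tsum fun k => (hm.indicator measurableSet_Ioo).aemeasurable).symm
      _ ≤ ∫⁻ s, (Ioi (0:ℝ)).indicator (fun s => 3 * (H s * ENNReal.ofReal s)) s := by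
          refine lintegral_mono fun s => ?_
          rcases le_or_gt s 0 with h | h
          · have hz : ∀ k : ℤ, (Ioo ((2:ℝ)^(k-1)) ((2:ℝ)^(k+2))).indicator
                (fun s => H s * ENNReal.ofReal s) s = 0 := by
              intro k
              apply indicator_of_notMem
              intro hmem
              have : (0:ℝ) < s := lt_of_lt_of_le (by positivity) hmem.1.le
              linarith
            simp [hz]
          · rw [indicator_of_mem (mem_Ioi.mpr h)]
            exact stmt10_count _ h
      _ = 3 * ∫⁻ s in Ioi (0:ℝ), H s * ENNReal.ofReal s := by
          rw [lintegral_indicator measurableSet_Ioi,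
            lintegral_const_mul' _ _ (by norm_num : (3:ℝ≥0∞) ≠ ⊤)]
  calc (∑' k : ℤ, ∫⁻ t in Ioo ((2:ℝ)^(k-1)) ((2:ℝ)^(k+2)),
          (∫⁻ x, (‖F t x - F ((2:ℝ)^(k-1)) x‖₊ : ℝ≥0∞) ^ 2) / ENNReal.ofReal t)
      ≤ ∑' k : ℤ, 64 * ∫⁻ s in Ioo ((2:ℝ)^(k-1)) ((2:ℝ)^(k+2)), H s * ENNReal.ofReal s :=
        ENNReal.tsum_le_tsum main
    _ = 64 * ∑' k : ℤ, ∫⁻ s in Ioo ((2:ℝ)^(k-1)) ((2:ℝ)^(k+2)), H s * ENNReal.ofReal s :=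
        ENNReal.tsum_mul_left
    _ ≤ 64 * (3 * ∫⁻ s in Ioi (0:ℝ), H s * ENNReal.ofReal s) := by gcongr
    _ = ENNReal.ofReal 192 * ∫⁻ s in Ioi (0:ℝ), H s * ENNReal.ofReal s := by
        rw [← mul_assoc]
        norm_num
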